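/- For every sign matrix S, VC(S) ≤ dual-sign-rank(S) ≤ 2·VC(S) + 1, where dual-sign-rank(S) denotes the maximum size of a set of columns of S that is antipodally shattered in S. -/

import Mathlib

/-- A sign matrix: all entries are `+1` or `-1`. -/
def IsSignMatrix {R C : Type*} (S : Matrix R C ℝ) : Prop :=
  ∀ i j, S i j = 1 ∨ S i j = -1

/-- A set `T` of columns of `S` is shattered if every sign pattern on `T` occurs as the
restriction of some row of `S` to `T`. -/
def Shattered {R C : Type*} (S : Matrix R C ℝ) (T : Finset C) : Prop :=
  ∀ v : C → ℝ, (∀ c ∈ T, v c = 1 ∨ v c = -1) → ∃ r : R, ∀ c ∈ T, S r c = v c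

/-- A set `T` of columns of `S` is antipodally shattered if for every sign pattern `v` on `T`,
either `v` or `-v` occurs as the restriction of some row of `S` to `T`. -/
def AntipodallyShattered {R C : Type*} (S : Matrix R C ℝ) (T : Finset C) : Prop :=
  ∀ v : C → ℝ, (∀ c ∈ T, v c = 1 ∨ v c = -1) →
    (∃ r : R, ∀ c ∈ T, S r c = v c) ∨ (∃ r : R, ∀ c ∈ T, S r c = -v c)

/-- The VC dimension of a sign matrix: the maximum size of a shattered set of columns. -/
noncomputable def VCdim {R C : Type*} (S : Matrix R C ℝ) : ℕ :=
  sSup {k | ∃ T : Finset C, T.card = k ∧ Shattered S T}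

/-- The dual sign rank of a sign matrix: the maximum size of an antipodally shattered set of
columns. -/
noncomputable def dualSignRank {R C : Type*} (S : Matrix R C ℝ) : ℕ :=
  sSup {k | ∃ T : Finset C, T.card = k ∧ AntipodallyShattered S T}

/-- `VC(S) ≤ dual-sign-rank(S) ≤ 2 VC(S) + 1` for every sign matrix `S`. -/
lemma numeric_aux (k d : ℕ) (h : 2 ^ k ≤ 2 * ∑ i ∈ Finset.Iic d, k.choose i) :
    k ≤ 2 * d + 1 := by
  by_contra hk
  push_neg at hk
  have hdk : d + 1 ≤ k := by omega
  set A : Finset ℕ := Finset.Iic d with hA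
  set B : Finset ℕ := A.image (fun i => k - i) with hB
  have hsum : ∑ i ∈ B, k.choose i = ∑ i ∈ A, k.choose i := by
    rw [hB, Finset.sum_image]
    · refine Finset.sum_congr rfl fun i hi => ?_
      simp only [hA, Finset.mem_Iic] at hi
      exact Nat.choose_symm (by omega)
    · intro i hi j hj hij
      simp only [hA, Finset.mem_Iic] at hi hj
      simp only [Finset.coe_Iic, Set.mem_Iic, Finset.mem_coe, Finset.mem_Iic] at hi hj hij; omega
  have hdisj : Disjoint A B := by
    rw [Finset.disjoint_left]
    intro i hiA hiB
    simp only [hA, Finset.mem_Iic] at hiA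
    simp only [hB, hA, Finset.mem_image, Finset.mem_Iic] at hiB
    obtain ⟨j, hj, rfl⟩ := hiB
    omega
  have hsub : A ∪ B ⊆ (Finset.range (k + 1)).erase (d + 1) := by
    intro i hi
    rw [Finset.mem_union] at hi
    rw [Finset.mem_erase, Finset.mem_range]
    rcases hi with hi | hi
    · simp only [hA, Finset.mem_Iic] at hi; omega
    · simp only [hB, hA, Finset.mem_image, Finset.mem_Iic] at hi
      obtain ⟨j, hj, rfl⟩ := hi; omega
  have h2 : 2 * ∑ i ∈ A, k.choose i = ∑ i ∈ A ∪ B, k.choose i := by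
    rw [Finset.sum_union hdisj, hsum]; ring
  have h3 : ∑ i ∈ A ∪ B, k.choose i ≤ ∑ i ∈ (Finset.range (k + 1)).erase (d + 1), k.choose i :=
    Finset.sum_le_sum_of_subset hsub
  have h4 : ∑ i ∈ (Finset.range (k + 1)).erase (d + 1), k.choose i + k.choose (d + 1)
      = 2 ^ k := by
    rw [Finset.sum_erase_add _ _ (by simp [Finset.mem_range]; omega), Nat.sum_range_choose]
  have h5 : 0 < k.choose (d + 1) := Nat.choose_pos hdk
  omega

lemma main_card_le {R C : ℕ} (S : Matrix (Fin R) (Fin C) ℝ) (hS : IsSignMatrix S)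
    (T : Finset (Fin C)) (hT : AntipodallyShattered S T) : T.card ≤ 2 * VCdim S + 1 := by
  classical
  set 𝒜 : Finset (Finset ↥T) :=
    Finset.univ.image (fun r : Fin R => Finset.univ.filter (fun c : ↥T => S r c.1 = 1)) with h𝒜
  -- every subset or its complement is in 𝒜
  have key : ∀ t : Finset ↥T, t ∈ 𝒜 ∨ tᶜ ∈ 𝒜 := by
    intro t
    set v : Fin C → ℝ := fun c => if h : c ∈ T then (if (⟨c, h⟩ : ↥T) ∈ t then 1 else -1) else 1
      with hv
    have hv1 : ∀ c ∈ T, v c = 1 ∨ v c = -1 := by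
      intro c hc
      simp only [hv, dif_pos hc]
      split <;> simp
    rcases hT v hv1 with ⟨r, hr⟩ | ⟨r, hr⟩
    · left
      rw [h𝒜, Finset.mem_image]
      refine ⟨r, Finset.mem_univ r, ?_⟩
      ext c
      have := hr c.1 c.2
      simp only [hv, dif_pos c.2] at this
      simp only [Finset.mem_filter, Finset.mem_univ, true_and, this]
      split <;> simp_all <;> norm_num
    · right
      rw [h𝒜, Finset.mem_image]
      refine ⟨r, Finset.mem_univ r, ?_⟩
      ext c
      have := hr c.1 c.2
      simp only [hv, dif_pos c.2] at this
      simp only [Finset.mem_filter, Finset.mem_univ, true_and, this, Finset.mem_compl]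
      split <;> simp_all <;> norm_num
  -- lower bound on #𝒜
  have hlow : 2 ^ T.card ≤ 2 * 𝒜.card := by
    have hsub : (Finset.univ : Finset (Finset ↥T)) ⊆ 𝒜 ∪ 𝒜.image compl := by
      intro t _
      rcases key t with h | h
      · exact Finset.mem_union_left _ h
      · refine Finset.mem_union_right _ ?_
        rw [Finset.mem_image]
        exact ⟨tᶜ, h, compl_compl t⟩
    have h1 : (Finset.univ : Finset (Finset ↥T)).card ≤ 𝒜.card + (𝒜.image compl).card :=
      le_trans (Finset.card_le_card hsub) (Finset.card_union_le _ _)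
    have h2 : (𝒜.image compl).card ≤ 𝒜.card := Finset.card_image_le
    have h3 : (Finset.univ : Finset (Finset ↥T)).card = 2 ^ T.card := by
      rw [Finset.card_univ, Fintype.card_finset, Fintype.card_coe]
    omega
  -- VC bound: shattered sets of 𝒜 give shattered column sets of S
  have hbdd : BddAbove {k | ∃ T : Finset (Fin C), T.card = k ∧ Shattered S T} := by
    refine ⟨C, fun k hk => ?_⟩
    obtain ⟨T', hT', _⟩ := hk
    calc k = T'.card := hT'.symm
    _ ≤ (Finset.univ : Finset (Fin C)).card := Finset.card_le_univ T'
    _ = C := by simp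
  have hvc : 𝒜.vcDim ≤ VCdim S := by
    apply Finset.sup_le
    intro s hs
    rw [Finset.mem_shatterer] at hs
    have hshat : Shattered S (s.image Subtype.val) := by
      intro v hv
      have ht : s.filter (fun c : ↥T => v c.1 = 1) ⊆ s := Finset.filter_subset _ _
      obtain ⟨u, hu, hsu⟩ := hs ht
      rw [h𝒜, Finset.mem_image] at hu
      obtain ⟨r, -, rfl⟩ := hu
      refine ⟨r, ?_⟩
      intro c hc
      rw [Finset.mem_image] at hc
      obtain ⟨c', hc', rfl⟩ := hc
      rcases hv c'.1 (Finset.mem_image_of_mem _ hc') with h1 | h1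
      · have : c' ∈ s.filter (fun c : ↥T => v c.1 = 1) := Finset.mem_filter.2 ⟨hc', h1⟩
        rw [← hsu, Finset.mem_inter, Finset.mem_filter] at this
        rw [h1]; exact this.2.2
      · rcases hS r c'.1 with h2 | h2
        · exfalso
          have : c' ∈ s ∩ Finset.univ.filter (fun c : ↥T => S r c.1 = 1) :=
            Finset.mem_inter.2 ⟨hc', Finset.mem_filter.2 ⟨Finset.mem_univ _, h2⟩⟩
          rw [hsu, Finset.mem_filter] at this
          rw [this.2] at h1; norm_num at h1
        · rw [h1, h2]
    have hcard : (s.image Subtype.val).card = s.card :=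
      Finset.card_image_of_injective _ Subtype.val_injective
    exact le_csSup hbdd ⟨s.image Subtype.val, hcard, hshat⟩
  -- Sauer-Shelah
  have hsauer : 𝒜.card ≤ ∑ i ∈ Finset.Iic (VCdim S), T.card.choose i := by
    calc 𝒜.card ≤ 𝒜.shatterer.card := Finset.card_le_card_shatterer 𝒜
    _ ≤ ∑ i ∈ Finset.Iic 𝒜.vcDim, (Fintype.card ↥T).choose i := Finset.card_shatterer_le_sum_vcDim
    _ ≤ ∑ i ∈ Finset.Iic (VCdim S), (Fintype.card ↥T).choose i :=
        Finset.sum_le_sum_of_subset (Finset.Iic_subset_Iic.2 hvc)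
    _ = ∑ i ∈ Finset.Iic (VCdim S), T.card.choose i := by rw [Fintype.card_coe]
  have := numeric_aux T.card (VCdim S) (le_trans hlow (by omega))
  exact this

theorem vcdim_le_dualSignRank_le_two_mul_vcdim_add_one
    (R C : ℕ) (S : Matrix (Fin R) (Fin C) ℝ) (hS : IsSignMatrix S) :
    VCdim S ≤ dualSignRank S ∧ dualSignRank S ≤ 2 * VCdim S + 1 := by
  constructor
  · rcases Set.eq_empty_or_nonempty {k | ∃ T : Finset (Fin C), T.card = k ∧ Shattered S T}
      with he | hne
    · rw [VCdim, he, csSup_empty]; exact Nat.zero_le _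
    · refine csSup_le_csSup ?_ hne ?_
      · refine ⟨C, fun k hk => ?_⟩
        obtain ⟨T', hT', _⟩ := hk
        calc k = T'.card := hT'.symm
        _ ≤ (Finset.univ : Finset (Fin C)).card := Finset.card_le_univ T'
        _ = C := by simp
      · rintro k ⟨T, hTc, hTs⟩
        exact ⟨T, hTc, fun v hv => Or.inl (hTs v hv)⟩
  · rcases Set.eq_empty_or_nonempty
      {k | ∃ T : Finset (Fin C), T.card = k ∧ AntipodallyShattered S T} with he | hne
    · rw [dualSignRank, he, csSup_empty]; exact Nat.zero_le _
    · refine csSup_le hne ?_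
      rintro k ⟨T, rfl, hT⟩
      exact main_card_le S hS T hT
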